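/- For any r ∈ ℓ²(ℤ) nonnegative and N ≥ 1: Σ_{n>N} Σ_{p≠±n} Σ_{k,i≠±n} (1/(n²-p²)²)·(2n/|n-i|)·r(n+i)²·r(k+p)² ≤ C·‖r‖²·(‖r‖²/N + E_N(r)²) for an absolute constant C. -/

import Mathlib

open scoped ENNReal

noncomputable def l2norm2 (r : ℤ → ℝ) : ℝ≥0∞ := ∑' k : ℤ, ENNReal.ofReal ((r k) ^ 2)

noncomputable def tailNorm2 (r : ℤ → ℝ) (N : ℕ) : ℝ≥0∞ :=
  ∑' k : {k : ℤ // (N : ℤ) ≤ |k|}, ENNReal.ofReal ((r k.1) ^ 2)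

noncomputable def S2 : ℝ≥0∞ := ∑' m : ℤ, ENNReal.ofReal (1 / (m:ℝ)^2)

lemma subtype_tsum_le (f : ℤ → ℝ≥0∞) (P : ℤ → Prop) :
    ∑' x : {x : ℤ // P x}, f x.1 ≤ ∑' x, f x :=
  ENNReal.tsum_comp_le_tsum_of_injective Subtype.val_injective f

lemma S2_le : ∃ c : ℝ, 1 ≤ c ∧ S2 ≤ ENNReal.ofReal c := by
  have hs : Summable (fun n : ℤ => 1 / (n:ℝ)^2) := Real.summable_one_div_int_pow.mpr one_lt_two
  refine ⟨max 1 (∑' m : ℤ, 1 / (m:ℝ)^2), le_max_left _ _, ?_⟩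
  rw [S2, ← ENNReal.ofReal_tsum_of_nonneg (fun n => by positivity) hs]
  exact ENNReal.ofReal_le_ofReal (le_max_right _ _)

lemma A_bound {n p : ℤ} (hn : 0 < n) (hp1 : p ≠ n) (hp2 : p ≠ -n) :
    1 / ((n:ℝ)^2 - (p:ℝ)^2)^2 ≤
      1/(2*(n:ℝ)^2) * (1/((n:ℝ)-(p:ℝ))^2) + 1/(2*(n:ℝ)^2) * (1/((n:ℝ)+(p:ℝ))^2) := by
  have hn' : (0:ℝ) < n := by exact_mod_cast hn
  have ha : (n:ℝ) - p ≠ 0 := sub_ne_zero.mpr (by exact_mod_cast (Ne.symm hp1))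
  have hb : (n:ℝ) + p ≠ 0 := by
    intro h; apply hp2; have : (p:ℝ) = -(n:ℝ) := by linarith
    exact_mod_cast this
  have ha2 : (0:ℝ) < ((n:ℝ)-p)^2 := pow_two_pos_of_ne_zero ha
  have hb2 : (0:ℝ) < ((n:ℝ)+p)^2 := pow_two_pos_of_ne_zero hb
  have hfac : ((n:ℝ)^2 - (p:ℝ)^2) = ((n:ℝ)-p)*((n:ℝ)+p) := by ring
  have hcomb : 1/(2*(n:ℝ)^2) * (1/((n:ℝ)-p)^2) + 1/(2*(n:ℝ)^2) * (1/((n:ℝ)+p)^2)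
      = (((n:ℝ)-p)^2 + ((n:ℝ)+p)^2) / (2*(n:ℝ)^2 * (((n:ℝ)-p)^2 * ((n:ℝ)+p)^2)) := by
    field_simp; ring
  rw [hfac, hcomb, mul_pow, div_le_div_iff₀ (by positivity) (by positivity)]
  nlinarith [sq_nonneg ((p:ℝ)*(((n:ℝ)-p)*((n:ℝ)+p))), sq_nonneg ((n:ℝ)-p), sq_nonneg ((n:ℝ)+p),
    mul_pos ha2 hb2, sq_nonneg ((p:ℝ))]

lemma B_bound {n i : ℤ} (hi : i ≠ n) :
    2*(n:ℝ)/|(n:ℝ) - (i:ℝ)| ≤ (n:ℝ)^2/((n:ℝ)-(i:ℝ))^2 + 1 := by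
  have hm : (n:ℝ) - i ≠ 0 := sub_ne_zero.mpr (by exact_mod_cast (Ne.symm hi))
  have ht : (0:ℝ) < |(n:ℝ) - i| := abs_pos.mpr hm
  have h1 : (n:ℝ)^2/((n:ℝ)-i)^2 = ((n:ℝ)/|(n:ℝ)-i|)^2 := by
    rw [div_pow, sq_abs]
  have h2 : 2*(n:ℝ)/|(n:ℝ)-i| = 2*((n:ℝ)/|(n:ℝ)-i|) := by ring
  rw [h1, h2]
  nlinarith [sq_nonneg ((n:ℝ)/|(n:ℝ)-i| - 1)]

def tailEquiv (N : ℕ) : ℕ ≃ {n : ℤ // (N:ℤ) < n} where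
  toFun := fun j => ⟨(N:ℤ)+1+j, by omega⟩
  invFun := fun n => (n.1 - N - 1).toNat
  left_inv := fun j => by
    show ((N:ℤ)+1+j - N - 1).toNat = j
    omega
  right_inv := fun n => by
    apply Subtype.ext
    have := n.2
    simp only []
    omega

lemma tail_inv_sq_le (N : ℕ) (hN : 1 ≤ N) :
    ∑' n : {n : ℤ // (N:ℤ) < n}, ENNReal.ofReal (1/((n.1:ℝ))^2) ≤ ENNReal.ofReal (1/(N:ℝ)) := by
  rw [← (tailEquiv N).tsum_eq]
  have hterm : ∀ j : ℕ, ENNReal.ofReal (1/(((tailEquiv N j).1:ℝ))^2)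
      ≤ ENNReal.ofReal (1/((N:ℝ)+j) - 1/((N:ℝ)+j+1)) := by
    intro j
    apply ENNReal.ofReal_le_ofReal
    have hx : (1:ℝ) ≤ (N:ℝ)+j := by
      have h1 : (1:ℝ) ≤ (N:ℝ) := by exact_mod_cast hN
      have h2 : (0:ℝ) ≤ (j:ℝ) := by positivity
      linarith
    have hv0 : ((tailEquiv N) j).1 = (N:ℤ)+1+j := rfl
    have hval : ((tailEquiv N j).1 : ℝ) = (N:ℝ)+1+j := by
      rw [hv0]; push_cast; ring
    rw [hval]
    have h2 : 1/((N:ℝ)+j) - 1/((N:ℝ)+j+1) = 1/(((N:ℝ)+j)*((N:ℝ)+j+1)) := by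
      field_simp
      ring
    rw [h2]
    apply one_div_le_one_div_of_le (by nlinarith)
    nlinarith
  have hnn : ∀ j : ℕ, 0 ≤ 1/((N:ℝ)+j) - 1/((N:ℝ)+j+1) := by
    intro j
    have hx : (1:ℝ) ≤ (N:ℝ)+j := by
      have h1 : (1:ℝ) ≤ (N:ℝ) := by exact_mod_cast hN
      have h2 : (0:ℝ) ≤ (j:ℝ) := by positivity
      linarith
    have h3 : 1/((N:ℝ)+j+1) ≤ 1/((N:ℝ)+j) := by
      apply one_div_le_one_div_of_le (by linarith); linarith
    linarith
  calc ∑' j : ℕ, ENNReal.ofReal (1/(((tailEquiv N j).1:ℝ))^2)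
      ≤ ∑' j : ℕ, ENNReal.ofReal (1/((N:ℝ)+j) - 1/((N:ℝ)+j+1)) :=
        ENNReal.tsum_le_tsum hterm
    _ ≤ ENNReal.ofReal (1/(N:ℝ)) := by
        rw [ENNReal.tsum_eq_iSup_nat]
        refine iSup_le fun n => ?_
        rw [← ENNReal.ofReal_sum_of_nonneg (fun j _ => hnn j)]
        refine ENNReal.ofReal_le_ofReal ?_
        have htel := Finset.sum_range_sub' (f := fun j : ℕ => 1/((N:ℝ)+j)) n
        calc ∑ j ∈ Finset.range n, (1/((N:ℝ)+j) - 1/((N:ℝ)+j+1))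
            = ∑ j ∈ Finset.range n, (1/((N:ℝ)+j) - 1/((N:ℝ)+(j+1:ℕ))) := by
              apply Finset.sum_congr rfl; intro j _; push_cast; ring
          _ = 1/((N:ℝ)+(0:ℕ)) - 1/((N:ℝ)+n) := htel
          _ ≤ 1/(N:ℝ) := by
              have h4 : (0:ℝ) ≤ 1/((N:ℝ)+n) := by positivity
              simp only [Nat.cast_zero, add_zero]
              linarith

lemma P_sum_A {n : ℤ} (hn : 0 < n) :
    ∑' p : {p : ℤ // p ≠ n ∧ p ≠ -n}, ENNReal.ofReal (1/((n:ℝ)^2 - (p.1:ℝ)^2)^2)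
      ≤ ENNReal.ofReal (1/(n:ℝ)^2) * S2 := by
  have hn' : (0:ℝ) < n := by exact_mod_cast hn
  have f := fun m : ℤ => ENNReal.ofReal (1/(m:ℝ)^2)
  calc ∑' p : {p : ℤ // p ≠ n ∧ p ≠ -n}, ENNReal.ofReal (1/((n:ℝ)^2 - (p.1:ℝ)^2)^2)
      ≤ ∑' p : {p : ℤ // p ≠ n ∧ p ≠ -n},
          (ENNReal.ofReal (1/(2*(n:ℝ)^2) * (1/((n:ℝ)-(p.1:ℝ))^2))
            + ENNReal.ofReal (1/(2*(n:ℝ)^2) * (1/((n:ℝ)+(p.1:ℝ))^2))) := by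
        refine ENNReal.tsum_le_tsum fun p => ?_
        rw [← ENNReal.ofReal_add (by positivity) (by positivity)]
        exact ENNReal.ofReal_le_ofReal (A_bound hn p.2.1 p.2.2)
    _ = (∑' p : {p : ℤ // p ≠ n ∧ p ≠ -n},
            ENNReal.ofReal (1/(2*(n:ℝ)^2) * (1/((n:ℝ)-(p.1:ℝ))^2)))
        + ∑' p : {p : ℤ // p ≠ n ∧ p ≠ -n},
            ENNReal.ofReal (1/(2*(n:ℝ)^2) * (1/((n:ℝ)+(p.1:ℝ))^2)) := ENNReal.tsum_add
    _ ≤ (∑' p : ℤ, ENNReal.ofReal (1/(2*(n:ℝ)^2) * (1/((n:ℝ)-(p:ℝ))^2)))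
        + ∑' p : ℤ, ENNReal.ofReal (1/(2*(n:ℝ)^2) * (1/((n:ℝ)+(p:ℝ))^2)) :=
        add_le_add (subtype_tsum_le _ _) (subtype_tsum_le _ _)
    _ = ENNReal.ofReal (1/(2*(n:ℝ)^2)) * (∑' p : ℤ, ENNReal.ofReal (1/((n:ℝ)-(p:ℝ))^2))
        + ENNReal.ofReal (1/(2*(n:ℝ)^2)) * (∑' p : ℤ, ENNReal.ofReal (1/((n:ℝ)+(p:ℝ))^2)) := by
        rw [← ENNReal.tsum_mul_left, ← ENNReal.tsum_mul_left]
        congr 1 <;> exact tsum_congr fun p => by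
          rw [← ENNReal.ofReal_mul (by positivity)]
    _ = ENNReal.ofReal (1/(2*(n:ℝ)^2)) * S2 + ENNReal.ofReal (1/(2*(n:ℝ)^2)) * S2 := by
        congr 1
        · congr 1
          have h1 : ∀ p : ℤ, ENNReal.ofReal (1/((n:ℝ)-(p:ℝ))^2)
              = ENNReal.ofReal (1/(((n - p : ℤ)):ℝ)^2) := by
            intro p; congr 2; push_cast; ring
          rw [tsum_congr h1]
          exact (Equiv.subLeft n).tsum_eq (fun m : ℤ => ENNReal.ofReal (1/(m:ℝ)^2))
        · congr 1
          have h1 : ∀ p : ℤ, ENNReal.ofReal (1/((n:ℝ)+(p:ℝ))^2)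
              = ENNReal.ofReal (1/(((n + p : ℤ)):ℝ)^2) := by
            intro p; congr 2; push_cast; ring
          rw [tsum_congr h1]
          exact (Equiv.addLeft n).tsum_eq (fun m : ℤ => ENNReal.ofReal (1/(m:ℝ)^2))
    _ = ENNReal.ofReal (1/(n:ℝ)^2) * S2 := by
        rw [← add_mul, ← ENNReal.ofReal_add (by positivity) (by positivity)]
        congr 2
        field_simp
        ring

/-- For any nonnegative `r ∈ ℓ²(ℤ)` and `N ≥ 1`:
`Σ_{n>N} Σ_{p≠±n} Σ_{k,i≠±n} (1/(n²-p²)²)(2n/|n-i|) r(n+i)² r(k+p)²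
  ≤ C ‖r‖² (‖r‖²/N + E_N(r)²)` for an absolute constant `C`. -/
theorem stmt18 : ∃ C : ℝ, 0 < C ∧ ∀ r : ℤ → ℝ, (∀ k, 0 ≤ r k) →
    Summable (fun k => (r k) ^ 2) → ∀ N : ℕ, 1 ≤ N →
    ∑' n : {n : ℤ // (N : ℤ) < n}, ∑' p : {p : ℤ // p ≠ n.1 ∧ p ≠ -n.1},
      ∑' k : {k : ℤ // k ≠ n.1 ∧ k ≠ -n.1}, ∑' i : {i : ℤ // i ≠ n.1 ∧ i ≠ -n.1},
      ENNReal.ofReal ((1 / ((n.1 : ℝ) ^ 2 - (p.1 : ℝ) ^ 2) ^ 2) *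
        (2 * (n.1 : ℝ) / |(n.1 : ℝ) - (i.1 : ℝ)|) *
        (r (n.1 + i.1)) ^ 2 * (r (k.1 + p.1)) ^ 2)
    ≤ ENNReal.ofReal C * l2norm2 r * (l2norm2 r / (N : ℝ≥0∞) + tailNorm2 r N) := by
  obtain ⟨c, hc1, hS2c⟩ := S2_le
  refine ⟨2*c + c^2, by nlinarith, ?_⟩
  intro r hr hsum N hN
  have hN1 : (1:ℤ) ≤ (N:ℤ) := by exact_mod_cast hN
  have htransR : ∀ t : ℤ, ∑' k : ℤ, ENNReal.ofReal (r (k + t) ^ 2) = l2norm2 r :=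
    fun t => (Equiv.addRight t).tsum_eq (fun m : ℤ => ENNReal.ofReal (r m ^ 2))
  have htransL : ∀ t : ℤ, ∑' k : ℤ, ENNReal.ofReal (r (t + k) ^ 2) = l2norm2 r :=
    fun t => (Equiv.addLeft t).tsum_eq (fun m : ℤ => ENNReal.ofReal (r m ^ 2))
  set L := l2norm2 r with hLdef
  set E := tailNorm2 r N with hEdef
  set D : {n : ℤ // (N:ℤ) < n} → ℝ≥0∞ :=
    fun n => ∑' j : ℤ, ENNReal.ofReal (1/(2*(n.1:ℝ) - (j:ℝ))^2 * r j ^ 2) with hDdef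
  -- Step 1 : per-n bound
  have step1 : ∀ n : {n : ℤ // (N:ℤ) < n},
      (∑' p : {p : ℤ // p ≠ n.1 ∧ p ≠ -n.1},
        ∑' k : {k : ℤ // k ≠ n.1 ∧ k ≠ -n.1}, ∑' i : {i : ℤ // i ≠ n.1 ∧ i ≠ -n.1},
        ENNReal.ofReal ((1 / ((n.1 : ℝ) ^ 2 - (p.1 : ℝ) ^ 2) ^ 2) *
          (2 * (n.1 : ℝ) / |(n.1 : ℝ) - (i.1 : ℝ)|) *
          (r (n.1 + i.1)) ^ 2 * (r (k.1 + p.1)) ^ 2))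
      ≤ ENNReal.ofReal c * L * (D n + ENNReal.ofReal (1/(n.1:ℝ)^2) * L) := by
    intro n
    have hn0 : 0 < n.1 := by have := n.2; omega
    have hn0R : (0:ℝ) < (n.1:ℝ) := by exact_mod_cast hn0
    set I : ℝ≥0∞ := ∑' i : {i : ℤ // i ≠ n.1 ∧ i ≠ -n.1},
      ENNReal.ofReal ((2 * (n.1:ℝ) / |(n.1:ℝ) - (i.1:ℝ)|) * r (n.1 + i.1) ^ 2) with hIdef
    set J : ℝ≥0∞ := ∑' i : {i : ℤ // i ≠ n.1 ∧ i ≠ -n.1},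
      ENNReal.ofReal ((n.1:ℝ)^2/((n.1:ℝ)-(i.1:ℝ))^2 * r (n.1 + i.1) ^ 2) with hJdef
    have inner_i : ∀ (p : {p : ℤ // p ≠ n.1 ∧ p ≠ -n.1}) (k : {k : ℤ // k ≠ n.1 ∧ k ≠ -n.1}),
        (∑' i : {i : ℤ // i ≠ n.1 ∧ i ≠ -n.1},
          ENNReal.ofReal ((1 / ((n.1 : ℝ) ^ 2 - (p.1 : ℝ) ^ 2) ^ 2) *
            (2 * (n.1 : ℝ) / |(n.1 : ℝ) - (i.1 : ℝ)|) *
            (r (n.1 + i.1)) ^ 2 * (r (k.1 + p.1)) ^ 2))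
        = (ENNReal.ofReal (1 / ((n.1 : ℝ) ^ 2 - (p.1 : ℝ) ^ 2) ^ 2)
            * ENNReal.ofReal ((r (k.1 + p.1)) ^ 2)) * I := by
      intro p k
      rw [hIdef, ← ENNReal.tsum_mul_left]
      refine tsum_congr fun i => ?_
      rw [show (1 / ((n.1 : ℝ) ^ 2 - (p.1 : ℝ) ^ 2) ^ 2) *
            (2 * (n.1 : ℝ) / |(n.1 : ℝ) - (i.1 : ℝ)|) *
            (r (n.1 + i.1)) ^ 2 * (r (k.1 + p.1)) ^ 2
          = ((1 / ((n.1 : ℝ) ^ 2 - (p.1 : ℝ) ^ 2) ^ 2) * (r (k.1 + p.1)) ^ 2)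
            * ((2 * (n.1 : ℝ) / |(n.1 : ℝ) - (i.1 : ℝ)|) * r (n.1 + i.1) ^ 2) from by ring]
      rw [ENNReal.ofReal_mul (by positivity), ENNReal.ofReal_mul (by positivity)]
    have inner_k : ∀ p : {p : ℤ // p ≠ n.1 ∧ p ≠ -n.1},
        (∑' k : {k : ℤ // k ≠ n.1 ∧ k ≠ -n.1},
          (ENNReal.ofReal (1 / ((n.1 : ℝ) ^ 2 - (p.1 : ℝ) ^ 2) ^ 2)
            * ENNReal.ofReal ((r (k.1 + p.1)) ^ 2)) * I)
        ≤ ENNReal.ofReal (1 / ((n.1 : ℝ) ^ 2 - (p.1 : ℝ) ^ 2) ^ 2) * (I * L) := by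
      intro p
      have hcomm : ∀ k : {k : ℤ // k ≠ n.1 ∧ k ≠ -n.1},
          (ENNReal.ofReal (1 / ((n.1 : ℝ) ^ 2 - (p.1 : ℝ) ^ 2) ^ 2)
            * ENNReal.ofReal ((r (k.1 + p.1)) ^ 2)) * I
          = (ENNReal.ofReal (1 / ((n.1 : ℝ) ^ 2 - (p.1 : ℝ) ^ 2) ^ 2) * I)
            * ENNReal.ofReal ((r (k.1 + p.1)) ^ 2) := fun k => by ring
      calc (∑' k : {k : ℤ // k ≠ n.1 ∧ k ≠ -n.1},
            (ENNReal.ofReal (1 / ((n.1 : ℝ) ^ 2 - (p.1 : ℝ) ^ 2) ^ 2)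
              * ENNReal.ofReal ((r (k.1 + p.1)) ^ 2)) * I)
          = (ENNReal.ofReal (1 / ((n.1 : ℝ) ^ 2 - (p.1 : ℝ) ^ 2) ^ 2) * I)
            * ∑' k : {k : ℤ // k ≠ n.1 ∧ k ≠ -n.1}, ENNReal.ofReal ((r (k.1 + p.1)) ^ 2) := by
            rw [tsum_congr hcomm, ENNReal.tsum_mul_left]
        _ ≤ (ENNReal.ofReal (1 / ((n.1 : ℝ) ^ 2 - (p.1 : ℝ) ^ 2) ^ 2) * I) * L := by
            refine mul_le_mul_right ?_ _
            refine le_trans (subtype_tsum_le (fun k => ENNReal.ofReal ((r (k + p.1)) ^ 2)) _) ?_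
            exact le_of_eq (htransR p.1)
        _ = ENNReal.ofReal (1 / ((n.1 : ℝ) ^ 2 - (p.1 : ℝ) ^ 2) ^ 2) * (I * L) :=
            mul_assoc _ _ _
    have hI : I ≤ J + L := by
      have hle : ∀ i : {i : ℤ // i ≠ n.1 ∧ i ≠ -n.1},
          ENNReal.ofReal ((2 * (n.1:ℝ) / |(n.1:ℝ) - (i.1:ℝ)|) * r (n.1 + i.1) ^ 2)
          ≤ ENNReal.ofReal ((n.1:ℝ)^2/((n.1:ℝ)-(i.1:ℝ))^2 * r (n.1 + i.1) ^ 2)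
            + ENNReal.ofReal (r (n.1 + i.1) ^ 2) := by
        intro i
        have hBnn : 0 ≤ 2*(n.1:ℝ)/|(n.1:ℝ)-(i.1:ℝ)| := div_nonneg (by linarith) (abs_nonneg _)
        calc ENNReal.ofReal ((2 * (n.1:ℝ) / |(n.1:ℝ) - (i.1:ℝ)|) * r (n.1 + i.1) ^ 2)
            = ENNReal.ofReal (2 * (n.1:ℝ) / |(n.1:ℝ) - (i.1:ℝ)|)
              * ENNReal.ofReal (r (n.1 + i.1) ^ 2) := ENNReal.ofReal_mul hBnn
          _ ≤ (ENNReal.ofReal ((n.1:ℝ)^2/((n.1:ℝ)-(i.1:ℝ))^2) + 1)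
              * ENNReal.ofReal (r (n.1 + i.1) ^ 2) := by
              refine mul_le_mul_left ?_ _
              calc ENNReal.ofReal (2 * (n.1:ℝ) / |(n.1:ℝ) - (i.1:ℝ)|)
                  ≤ ENNReal.ofReal ((n.1:ℝ)^2/((n.1:ℝ)-(i.1:ℝ))^2 + 1) :=
                    ENNReal.ofReal_le_ofReal (B_bound i.2.1)
                _ = ENNReal.ofReal ((n.1:ℝ)^2/((n.1:ℝ)-(i.1:ℝ))^2) + 1 := by
                    rw [ENNReal.ofReal_add (by positivity) (by norm_num), ENNReal.ofReal_one]
          _ = ENNReal.ofReal ((n.1:ℝ)^2/((n.1:ℝ)-(i.1:ℝ))^2 * r (n.1 + i.1) ^ 2)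
              + ENNReal.ofReal (r (n.1 + i.1) ^ 2) := by
              rw [add_mul, one_mul, ← ENNReal.ofReal_mul (by positivity)]
      calc I ≤ ∑' i : {i : ℤ // i ≠ n.1 ∧ i ≠ -n.1},
            (ENNReal.ofReal ((n.1:ℝ)^2/((n.1:ℝ)-(i.1:ℝ))^2 * r (n.1 + i.1) ^ 2)
              + ENNReal.ofReal (r (n.1 + i.1) ^ 2)) := ENNReal.tsum_le_tsum hle
        _ = J + ∑' i : {i : ℤ // i ≠ n.1 ∧ i ≠ -n.1}, ENNReal.ofReal (r (n.1 + i.1) ^ 2) :=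
            ENNReal.tsum_add
        _ ≤ J + L := by
            refine add_le_add_right ?_ J
            refine le_trans (subtype_tsum_le (fun i => ENNReal.ofReal (r (n.1 + i) ^ 2)) _) ?_
            exact le_of_eq (htransL n.1)
    have hJD : ENNReal.ofReal (1/(n.1:ℝ)^2) * J ≤ D n := by
      rw [hJdef, ← ENNReal.tsum_mul_left]
      have hinj : Function.Injective
          (fun i : {i : ℤ // i ≠ n.1 ∧ i ≠ -n.1} => n.1 + i.1) := by
        intro a b h
        have h2 := h
        simp only at h2
        exact Subtype.ext (by omega)
      calc (∑' i : {i : ℤ // i ≠ n.1 ∧ i ≠ -n.1},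
            ENNReal.ofReal (1/(n.1:ℝ)^2)
              * ENNReal.ofReal ((n.1:ℝ)^2/((n.1:ℝ)-(i.1:ℝ))^2 * r (n.1 + i.1) ^ 2))
          = ∑' i : {i : ℤ // i ≠ n.1 ∧ i ≠ -n.1},
              (fun j : ℤ => ENNReal.ofReal (1/(2*(n.1:ℝ) - (j:ℝ))^2 * r j ^ 2)) (n.1 + i.1) := by
            refine tsum_congr fun i => ?_
            rw [← ENNReal.ofReal_mul (by positivity)]
            have hm : (n.1:ℝ) - (i.1:ℝ) ≠ 0 :=
              sub_ne_zero.mpr (by exact_mod_cast (Ne.symm i.2.1))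
            have hnne : (n.1:ℝ) ≠ 0 := ne_of_gt hn0R
            congr 1
            push_cast
            rw [show 2*(n.1:ℝ) - ((n.1:ℝ)+(i.1:ℝ)) = (n.1:ℝ)-(i.1:ℝ) from by ring]
            field_simp
        _ ≤ ∑' j : ℤ, ENNReal.ofReal (1/(2*(n.1:ℝ) - (j:ℝ))^2 * r j ^ 2) :=
            ENNReal.tsum_comp_le_tsum_of_injective hinj _
        _ = D n := rfl
    calc (∑' p : {p : ℤ // p ≠ n.1 ∧ p ≠ -n.1},
          ∑' k : {k : ℤ // k ≠ n.1 ∧ k ≠ -n.1}, ∑' i : {i : ℤ // i ≠ n.1 ∧ i ≠ -n.1},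
          ENNReal.ofReal ((1 / ((n.1 : ℝ) ^ 2 - (p.1 : ℝ) ^ 2) ^ 2) *
            (2 * (n.1 : ℝ) / |(n.1 : ℝ) - (i.1 : ℝ)|) *
            (r (n.1 + i.1)) ^ 2 * (r (k.1 + p.1)) ^ 2))
        = ∑' p : {p : ℤ // p ≠ n.1 ∧ p ≠ -n.1},
            ∑' k : {k : ℤ // k ≠ n.1 ∧ k ≠ -n.1},
            (ENNReal.ofReal (1 / ((n.1 : ℝ) ^ 2 - (p.1 : ℝ) ^ 2) ^ 2)
              * ENNReal.ofReal ((r (k.1 + p.1)) ^ 2)) * I :=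
          tsum_congr fun p => tsum_congr fun k => inner_i p k
      _ ≤ ∑' p : {p : ℤ // p ≠ n.1 ∧ p ≠ -n.1},
            ENNReal.ofReal (1 / ((n.1 : ℝ) ^ 2 - (p.1 : ℝ) ^ 2) ^ 2) * (I * L) :=
          ENNReal.tsum_le_tsum inner_k
      _ = (∑' p : {p : ℤ // p ≠ n.1 ∧ p ≠ -n.1},
            ENNReal.ofReal (1 / ((n.1 : ℝ) ^ 2 - (p.1 : ℝ) ^ 2) ^ 2)) * (I * L) :=
          ENNReal.tsum_mul_right
      _ ≤ (ENNReal.ofReal (1/(n.1:ℝ)^2) * ENNReal.ofReal c) * (I * L) := by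
          refine mul_le_mul_left ?_ _
          refine le_trans ?_ (mul_le_mul_right hS2c _)
          exact P_sum_A hn0
      _ ≤ (ENNReal.ofReal (1/(n.1:ℝ)^2) * ENNReal.ofReal c) * ((J + L) * L) :=
          mul_le_mul_right (mul_le_mul_left hI L) _
      _ = ENNReal.ofReal c * L
            * (ENNReal.ofReal (1/(n.1:ℝ)^2) * J + ENNReal.ofReal (1/(n.1:ℝ)^2) * L) := by ring
      _ ≤ ENNReal.ofReal c * L * (D n + ENNReal.ofReal (1/(n.1:ℝ)^2) * L) :=
          mul_le_mul_right (add_le_add_left hJD _) _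
  -- Step 2 : bound for the sum of D
  have hDsum : ∑' n : {n : ℤ // (N:ℤ) < n}, D n
      ≤ ENNReal.ofReal c * E + ENNReal.ofReal (1/(N:ℝ)) * L := by
    set T : ℤ → ℝ≥0∞ :=
      fun j => ∑' n : {n : ℤ // (N:ℤ) < n}, ENNReal.ofReal (1/(2*(n.1:ℝ) - (j:ℝ))^2) with hT
    have hswap : ∑' n : {n : ℤ // (N:ℤ) < n}, D n
        = ∑' j : ℤ, T j * ENNReal.ofReal (r j ^ 2) := by
      rw [hDdef, ENNReal.tsum_comm]
      refine tsum_congr fun j => ?_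
      rw [hT, ← ENNReal.tsum_mul_right]
      exact tsum_congr fun n => by rw [← ENNReal.ofReal_mul (by positivity)]
    have hTS : ∀ j : ℤ, T j ≤ ENNReal.ofReal c := by
      intro j
      have hinj : Function.Injective
          (fun n : {n : ℤ // (N:ℤ) < n} => 2*n.1 - j) := by
        intro a b h
        have h2 := h
        simp only at h2
        exact Subtype.ext (by omega)
      refine le_trans ?_ hS2c
      rw [hT, S2]
      calc (∑' n : {n : ℤ // (N:ℤ) < n}, ENNReal.ofReal (1/(2*(n.1:ℝ) - (j:ℝ))^2))
          = ∑' n : {n : ℤ // (N:ℤ) < n},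
              (fun m : ℤ => ENNReal.ofReal (1/(m:ℝ)^2)) (2*n.1 - j) := by
            refine tsum_congr fun n => ?_
            congr 1
            push_cast
            ring
        _ ≤ ∑' m : ℤ, ENNReal.ofReal (1/(m:ℝ)^2) :=
            ENNReal.tsum_comp_le_tsum_of_injective hinj _
    have hTN : ∀ j : ℤ, |j| < (N:ℤ) → T j ≤ ENNReal.ofReal (1/(N:ℝ)) := by
      intro j hj
      obtain ⟨hj1, hj2⟩ := abs_lt.mp hj
      refine le_trans (ENNReal.tsum_le_tsum fun n => ?_) (tail_inv_sq_le N hN)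
      apply ENNReal.ofReal_le_ofReal
      have hnN : (N:ℤ) < n.1 := n.2
      have hZ : n.1^2 ≤ (2*n.1 - j)^2 := by
        nlinarith [mul_pos (show (0:ℤ) < 3*n.1-j by omega) (show (0:ℤ) < n.1-j by omega)]
      have hR : ((n.1:ℝ))^2 ≤ (2*(n.1:ℝ) - (j:ℝ))^2 := by exact_mod_cast hZ
      have hpos : (0:ℝ) < ((n.1:ℝ))^2 := by
        have : (0:ℝ) < (n.1:ℝ) := by exact_mod_cast (show (0:ℤ) < n.1 by omega)
        positivity
      exact one_div_le_one_div_of_le hpos hR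
    rw [hswap,
      ← Summable.tsum_add_tsum_compl (s := {j : ℤ | (N:ℤ) ≤ |j|}) ENNReal.summable ENNReal.summable]
    refine add_le_add ?_ ?_
    · calc (∑' j : ↥{j : ℤ | (N:ℤ) ≤ |j|}, T j.1 * ENNReal.ofReal (r j.1 ^ 2))
          ≤ ∑' j : ↥{j : ℤ | (N:ℤ) ≤ |j|}, ENNReal.ofReal c * ENNReal.ofReal (r j.1 ^ 2) :=
            ENNReal.tsum_le_tsum fun j => mul_le_mul_left (hTS j.1) _
        _ = ENNReal.ofReal c * ∑' j : ↥{j : ℤ | (N:ℤ) ≤ |j|}, ENNReal.ofReal (r j.1 ^ 2) :=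
            ENNReal.tsum_mul_left
        _ = ENNReal.ofReal c * E := rfl
    · calc (∑' j : ↥{j : ℤ | (N:ℤ) ≤ |j|}ᶜ, T j.1 * ENNReal.ofReal (r j.1 ^ 2))
          ≤ ∑' j : ↥{j : ℤ | (N:ℤ) ≤ |j|}ᶜ,
              ENNReal.ofReal (1/(N:ℝ)) * ENNReal.ofReal (r j.1 ^ 2) := by
            refine ENNReal.tsum_le_tsum fun j => mul_le_mul_left ?_ _
            refine hTN j.1 ?_
            have := j.2
            simp only [Set.mem_compl_iff, Set.mem_setOf_eq, not_le] at this
            exact this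
        _ = ENNReal.ofReal (1/(N:ℝ))
            * ∑' j : ↥{j : ℤ | (N:ℤ) ≤ |j|}ᶜ, ENNReal.ofReal (r j.1 ^ 2) :=
            ENNReal.tsum_mul_left
        _ ≤ ENNReal.ofReal (1/(N:ℝ)) * L := by
            refine mul_le_mul_right ?_ _
            exact subtype_tsum_le (fun k => ENNReal.ofReal (r k ^ 2)) _
  -- final assembly
  have hXN : ENNReal.ofReal (1/(N:ℝ)) = ((N:ℝ≥0∞))⁻¹ := by
    have hNpos : (0:ℝ) < (N:ℝ) := by exact_mod_cast lt_of_lt_of_le zero_lt_one hN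
    rw [one_div, ENNReal.ofReal_inv_of_pos hNpos, ENNReal.ofReal_natCast]
  have hcc : ENNReal.ofReal c * ENNReal.ofReal c ≤ ENNReal.ofReal (2*c + c^2) := by
    rw [← ENNReal.ofReal_mul (by linarith)]
    exact ENNReal.ofReal_le_ofReal (by nlinarith)
  have hc2 : ENNReal.ofReal c * 2 ≤ ENNReal.ofReal (2*c + c^2) := by
    rw [show (2:ℝ≥0∞) = ENNReal.ofReal 2 from by simp, ← ENNReal.ofReal_mul (by linarith)]
    exact ENNReal.ofReal_le_ofReal (by nlinarith)
  calc (∑' n : {n : ℤ // (N : ℤ) < n}, ∑' p : {p : ℤ // p ≠ n.1 ∧ p ≠ -n.1},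
        ∑' k : {k : ℤ // k ≠ n.1 ∧ k ≠ -n.1}, ∑' i : {i : ℤ // i ≠ n.1 ∧ i ≠ -n.1},
        ENNReal.ofReal ((1 / ((n.1 : ℝ) ^ 2 - (p.1 : ℝ) ^ 2) ^ 2) *
          (2 * (n.1 : ℝ) / |(n.1 : ℝ) - (i.1 : ℝ)|) *
          (r (n.1 + i.1)) ^ 2 * (r (k.1 + p.1)) ^ 2))
      ≤ ∑' n : {n : ℤ // (N:ℤ) < n},
          ENNReal.ofReal c * L * (D n + ENNReal.ofReal (1/(n.1:ℝ)^2) * L) :=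
        ENNReal.tsum_le_tsum step1
    _ = ENNReal.ofReal c * L * ((∑' n : {n : ℤ // (N:ℤ) < n}, D n)
          + (∑' n : {n : ℤ // (N:ℤ) < n}, ENNReal.ofReal (1/(n.1:ℝ)^2)) * L) := by
        rw [ENNReal.tsum_mul_left]
        congr 1
        rw [ENNReal.tsum_add, ENNReal.tsum_mul_right]
    _ ≤ ENNReal.ofReal c * L * ((ENNReal.ofReal c * E + ENNReal.ofReal (1/(N:ℝ)) * L)
          + ENNReal.ofReal (1/(N:ℝ)) * L) := by
        refine mul_le_mul_right (add_le_add hDsum (mul_le_mul_left (tail_inv_sq_le N hN) L)) _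
    _ = L * ((ENNReal.ofReal c * ENNReal.ofReal c) * E
          + (ENNReal.ofReal c * 2) * (ENNReal.ofReal (1/(N:ℝ)) * L)) := by ring
    _ ≤ L * (ENNReal.ofReal (2*c + c^2) * E
          + ENNReal.ofReal (2*c + c^2) * (ENNReal.ofReal (1/(N:ℝ)) * L)) := by
        gcongr
    _ = ENNReal.ofReal (2*c + c^2) * L * (L * ENNReal.ofReal (1/(N:ℝ)) + E) := by ring
    _ = ENNReal.ofReal (2*c + c^2) * L * (L / (N:ℝ≥0∞) + E) := by
        rw [hXN, div_eq_mul_inv]
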